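/- Let K be a compact metric space and, for continuous functions f, g : [0,1] → K, define dist(f, g) := inf_φ sup_{t∈[0,1]} d_K(f(t), g(φ(t))), where the infimum is over all increasing bijections φ : [0,1] → [0,1]. Then the quotient of C([0,1], K) by the equivalence relation f ∼ g ⟺ dist(f, g) = 0, equipped with the metric induced by dist, is a complete separable metric space. -/

import Mathlib

open unitInterval TopologicalSpace

/-- The reparametrization distance between two curves `f g : [0,1] → K`:
`dist(f,g) = inf_φ sup_t d(f t, g (φ t))`, the infimum running over all
increasing bijections `φ : [0,1] → [0,1]`. -/
noncomputable def curveDist {K : Type*} [MetricSpace K]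
    (f g : unitInterval → K) : ℝ :=
  ⨅ φ : {φ : unitInterval → unitInterval // StrictMono φ ∧ Function.Bijective φ},
    ⨆ t : unitInterval, dist (f t) (g (φ.1 t))

namespace CurveAux

/-- The type of increasing bijections of `[0,1]`. -/
abbrev Reparam : Type :=
  {φ : unitInterval → unitInterval // StrictMono φ ∧ Function.Bijective φ}

instance : Nonempty Reparam := ⟨⟨id, strictMono_id, Function.bijective_id⟩⟩

/-- Composition of reparametrizations. -/
def Reparam.comp (φ ψ : Reparam) : Reparam :=
  ⟨φ.1 ∘ ψ.1, φ.2.1.comp ψ.2.1, φ.2.2.comp ψ.2.2⟩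

/-- A reparametrization as an order isomorphism. -/
noncomputable def Reparam.iso (φ : Reparam) : unitInterval ≃o unitInterval :=
  φ.2.1.orderIsoOfSurjective φ.1 φ.2.2.2

/-- The inverse of a reparametrization. -/
noncomputable def Reparam.symm (φ : Reparam) : Reparam :=
  ⟨φ.iso.symm, φ.iso.symm.strictMono, φ.iso.symm.bijective⟩

lemma Reparam.iso_apply (φ : Reparam) (t : unitInterval) : φ.iso t = φ.1 t := rfl

lemma Reparam.apply_symm (φ : Reparam) (t : unitInterval) : φ.1 (φ.symm.1 t) = t :=
  φ.iso.apply_symm_apply t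

lemma Reparam.symm_apply (φ : Reparam) (t : unitInterval) : φ.symm.1 (φ.1 t) = t :=
  φ.iso.symm_apply_apply t

lemma Reparam.continuous (φ : Reparam) : Continuous φ.1 :=
  (φ.2.1.orderIsoOfSurjective φ.1 φ.2.2.2).toHomeomorph.continuous

variable {K : Type*} [MetricSpace K] [CompactSpace K]

/-- The sup-distance between `f` and `g ∘ φ`. -/
noncomputable def S (f g : unitInterval → K) (φ : Reparam) : ℝ :=
  ⨆ t : unitInterval, dist (f t) (g (φ.1 t))

lemma curveDist_eq (f g : unitInterval → K) : curveDist f g = ⨅ φ : Reparam, S f g φ := rfl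

lemma exists_bound : ∃ C : ℝ, ∀ x y : K, dist x y ≤ C := by
  obtain ⟨C, hC⟩ := Metric.isBounded_iff.1 (isCompact_univ (X := K)).isBounded
  exact ⟨C, fun x y => hC (Set.mem_univ x) (Set.mem_univ y)⟩

lemma S_bddAbove (f g : unitInterval → K) (φ : Reparam) :
    BddAbove (Set.range fun t : unitInterval => dist (f t) (g (φ.1 t))) := by
  obtain ⟨C, hC⟩ := exists_bound (K := K)
  exact ⟨C, by rintro x ⟨t, rfl⟩; exact hC _ _⟩

lemma S_nonneg (f g : unitInterval → K) (φ : Reparam) : 0 ≤ S f g φ :=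
  Real.iSup_nonneg fun _ => dist_nonneg

lemma le_S (f g : unitInterval → K) (φ : Reparam) (t : unitInterval) :
    dist (f t) (g (φ.1 t)) ≤ S f g φ :=
  le_ciSup (S_bddAbove f g φ) t

lemma curveDist_le_S (f g : unitInterval → K) (φ : Reparam) : curveDist f g ≤ S f g φ := by
  rw [curveDist_eq]
  exact ciInf_le ⟨0, by rintro x ⟨ψ, rfl⟩; exact S_nonneg f g ψ⟩ φ

lemma curveDist_nonneg (f g : unitInterval → K) : 0 ≤ curveDist f g := by
  rw [curveDist_eq]
  exact le_ciInf fun φ => S_nonneg f g φ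

lemma S_symm (f g : unitInterval → K) (φ : Reparam) : S f g φ.symm = S g f φ := by
  unfold S
  rw [← φ.2.2.2.iSup_comp (g := fun t => dist (f t) (g (φ.symm.1 t)))]
  simp only [Reparam.symm_apply]
  exact iSup_congr fun t => dist_comm _ _

lemma curveDist_comm_le (f g : unitInterval → K) : curveDist f g ≤ curveDist g f := by
  rw [curveDist_eq g f]
  refine le_ciInf fun φ => ?_
  exact (curveDist_le_S f g φ.symm).trans_eq (S_symm f g φ)

lemma curveDist_comm (f g : unitInterval → K) : curveDist f g = curveDist g f :=
  le_antisymm (curveDist_comm_le f g) (curveDist_comm_le g f)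

lemma curveDist_self (f : unitInterval → K) : curveDist f f = 0 := by
  refine le_antisymm ?_ (curveDist_nonneg f f)
  refine (curveDist_le_S f f ⟨id, strictMono_id, Function.bijective_id⟩).trans_eq ?_
  simp [S, ciSup_const]

lemma curveDist_triangle (f g h : unitInterval → K) :
    curveDist f h ≤ curveDist f g + curveDist g h := by
  refine le_of_forall_pos_le_add fun ε hε => ?_
  have h1 : curveDist f g < curveDist f g + ε / 2 := by linarith
  have h2 : curveDist g h < curveDist g h + ε / 2 := by linarith
  rw [curveDist_eq] at h1 h2
  obtain ⟨φ, hφ⟩ := exists_lt_of_ciInf_lt h1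
  obtain ⟨χ, hχ⟩ := exists_lt_of_ciInf_lt h2
  have key : curveDist f h ≤ S f g φ + S g h χ := by
    refine (curveDist_le_S f h (χ.comp φ)).trans ?_
    refine ciSup_le fun t => ?_
    calc dist (f t) (h ((χ.comp φ).1 t))
        ≤ dist (f t) (g (φ.1 t)) + dist (g (φ.1 t)) (h (χ.1 (φ.1 t))) := dist_triangle _ _ _
      _ ≤ S f g φ + S g h χ := add_le_add (le_S f g φ t) (le_S g h χ (φ.1 t))
  calc curveDist f h ≤ S f g φ + S g h χ := key
    _ ≤ (curveDist f g + ε / 2) + (curveDist g h + ε / 2) := add_le_add hφ.le hχ.le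
    _ = curveDist f g + curveDist g h + ε := by ring

lemma curveDist_reparam (f : unitInterval → K) (ψ : Reparam) :
    curveDist f (f ∘ ψ.1) = 0 := by
  refine le_antisymm ?_ (curveDist_nonneg _ _)
  refine (curveDist_le_S f (f ∘ ψ.1) ψ.symm).trans_eq ?_
  have : ∀ t : unitInterval, dist (f t) ((f ∘ ψ.1) (ψ.symm.1 t)) = 0 := by
    intro t; simp [Reparam.apply_symm]
  simp only [S, this, ciSup_const]

lemma curveDist_le_dist (f g : C(unitInterval, K)) : curveDist ⇑f ⇑g ≤ dist f g := by
  refine (curveDist_le_S ⇑f ⇑g ⟨id, strictMono_id, Function.bijective_id⟩).trans ?_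
  exact ciSup_le fun t => (ContinuousMap.dist_le dist_nonneg).1 le_rfl t

/-- The relation identifying curves at `curveDist` zero. -/
abbrev R : C(unitInterval, K) → C(unitInterval, K) → Prop := fun f g => curveDist ⇑f ⇑g = 0

lemma congr_right {f g g' : C(unitInterval, K)} (h : R g g') :
    curveDist ⇑f ⇑g = curveDist ⇑f ⇑g' := by
  have h' : curveDist ⇑g' ⇑g = 0 := by rw [curveDist_comm]; exact h
  refine le_antisymm ?_ ?_
  · have := curveDist_triangle ⇑f ⇑g' ⇑g
    rw [h'] at this; linarith
  · have := curveDist_triangle ⇑f ⇑g ⇑g'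
    rw [h] at this; linarith

lemma congr_left {f f' g : C(unitInterval, K)} (h : R f f') :
    curveDist ⇑f ⇑g = curveDist ⇑f' ⇑g := by
  rw [curveDist_comm, congr_right h, curveDist_comm]

/-- Lift of `curveDist` to the quotient. -/
noncomputable def qdist : Quot (R (K := K)) → Quot (R (K := K)) → ℝ :=
  Quot.lift
    (fun f => Quot.lift (fun g => curveDist ⇑f ⇑g) fun _ _ h => congr_right h)
    (fun f f' h => by
      funext x
      induction x using Quot.ind with
      | _ g => exact congr_left h)

@[simp] lemma qdist_mk (f g : C(unitInterval, K)) :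
    qdist (Quot.mk _ f) (Quot.mk _ g) = curveDist ⇑f ⇑g := rfl

/-- The metric space structure on the quotient. -/
noncomputable def curveMetric : MetricSpace (Quot (R (K := K))) where
  dist := qdist
  dist_self := by
    intro x; induction x using Quot.ind with
    | _ f => exact curveDist_self ⇑f
  dist_comm := by
    intro x y
    induction x using Quot.ind with
    | _ f =>
      induction y using Quot.ind with
      | _ g => exact curveDist_comm ⇑f ⇑g
  dist_triangle := by
    intro x y z
    induction x using Quot.ind with
    | _ f =>
      induction y using Quot.ind with
      | _ g =>
        induction z using Quot.ind with
        | _ h => exact curveDist_triangle ⇑f ⇑g ⇑h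
  eq_of_dist_eq_zero := by
    intro x y
    induction x using Quot.ind with
    | _ f =>
      induction y using Quot.ind with
      | _ g => exact fun h => Quot.sound h

end CurveAux

attribute [-instance] instTopologicalSpaceQuot in
open CurveAux in
/-- **The space of curves is a complete separable metric space.**
For a compact metric space `K`, the quotient of `C([0,1], K)` by the relation
`f ∼ g ⟺ curveDist f g = 0` carries a metric inducing `curveDist`, and with it
the quotient is a complete and separable metric space. -/
theorem curveSpace_completeSpace_separableSpace
    {K : Type*} [MetricSpace K] [CompactSpace K] :
    ∃ m : MetricSpace (Quot fun f g : C(unitInterval, K) => curveDist ⇑f ⇑g = 0),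
      (∀ f g : C(unitInterval, K),
        @dist _ m.toPseudoMetricSpace.toDist (Quot.mk _ f) (Quot.mk _ g)
          = curveDist ⇑f ⇑g) ∧
      @CompleteSpace _ m.toPseudoMetricSpace.toUniformSpace ∧
      @SeparableSpace _ m.toPseudoMetricSpace.toUniformSpace.toTopologicalSpace := by
  letI m : MetricSpace (Quot (R (K := K))) := curveMetric
  refine ⟨m, fun f g => rfl, ?_, ?_⟩
  · -- Completeness
    refine Metric.complete_of_convergent_controlled_sequences
      (fun n => (1 / 2 : ℝ) ^ n) (fun n => by positivity) fun u hu => ?_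
    choose f hf using fun n => Quot.exists_rep (u n)
    have hd : ∀ n, curveDist ⇑(f n) ⇑(f (n + 1)) < (1 / 2 : ℝ) ^ n := by
      intro n
      have := hu n n (n + 1) le_rfl (Nat.le_succ n)
      rw [← hf n, ← hf (n + 1)] at this
      exact this
    have hex : ∀ n, ∃ φ : Reparam, S ⇑(f n) ⇑(f (n + 1)) φ < (1 / 2 : ℝ) ^ n := by
      intro n
      have := hd n
      rw [curveDist_eq] at this
      exact exists_lt_of_ciInf_lt this
    choose φ hφ using hex
    -- cumulative reparametrizations
    let ψ : ℕ → Reparam := fun n =>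
      Nat.rec ⟨id, strictMono_id, Function.bijective_id⟩ (fun n p => (φ n).comp p) n
    have hψ : ∀ n, ψ (n + 1) = (φ n).comp (ψ n) := fun n => rfl
    let h : ℕ → C(unitInterval, K) := fun n =>
      ⟨⇑(f n) ∘ (ψ n).1, (f n).continuous.comp (Reparam.continuous (ψ n))⟩
    have hdh : ∀ n, dist (h n) (h (n + 1)) ≤ (1 : ℝ) * (1 / 2 : ℝ) ^ n := by
      intro n
      rw [one_mul, ContinuousMap.dist_le (by positivity)]
      intro t
      have : dist ((f n) ((ψ n).1 t)) ((f (n + 1)) ((φ n).1 ((ψ n).1 t)))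
          ≤ S ⇑(f n) ⇑(f (n + 1)) (φ n) := le_S _ _ _ _
      exact this.trans (hφ n).le
    have hcauchy : CauchySeq h := cauchySeq_of_le_geometric (1 / 2 : ℝ) 1 (by norm_num) hdh
    obtain ⟨L, hL⟩ := cauchySeq_tendsto_of_complete hcauchy
    refine ⟨Quot.mk _ L, ?_⟩
    rw [tendsto_iff_dist_tendsto_zero]
    have hbound : ∀ n, dist (u n) (Quot.mk _ L) ≤ dist (h n) L := by
      intro n
      have e1 : dist (u n) (Quot.mk _ L) = curveDist ⇑(f n) ⇑L := by
        rw [← hf n]; rfl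
      have e2 : curveDist ⇑(f n) ⇑(h n) = 0 := curveDist_reparam ⇑(f n) (ψ n)
      calc dist (u n) (Quot.mk _ L) = curveDist ⇑(f n) ⇑L := e1
        _ ≤ curveDist ⇑(f n) ⇑(h n) + curveDist ⇑(h n) ⇑L := curveDist_triangle _ _ _
        _ = curveDist ⇑(h n) ⇑L := by rw [e2, zero_add]
        _ ≤ dist (h n) L := curveDist_le_dist _ _
    have hto : Filter.Tendsto (fun n => dist (h n) L) Filter.atTop (nhds 0) :=
      tendsto_iff_dist_tendsto_zero.1 hL
    exact squeeze_zero (fun n => dist_nonneg) hbound hto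
  · -- Separability
    have hlip : LipschitzWith 1 (Quot.mk (R (K := K))) := by
      refine LipschitzWith.of_dist_le_mul fun f g => ?_
      simpa using (show dist (Quot.mk (R (K := K)) f) (Quot.mk _ g) ≤ dist f g from curveDist_le_dist f g)
    exact (Function.Surjective.denseRange fun x => Quot.exists_rep x).separableSpace hlip.continuous
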